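/- Let μ̄ be a probability measure on X × Y, where (X, ρ, μ) is a metric probability space with marginal μ and Y is a countable label set. For any ν > 0 there exists β = β(ν) > 0 with the following property. Let V = {V_1, V_2, …} be any countable measurable partition of X and T ⊆ X any measurable set satisfying (i) μ(X ∖ T) ≤ ν and (ii) diam(V ∩ T) ≤ β for every cell V ∈ V. Let h : X → Y be any classifier that is constant on each cell of V and whose value on each cell V with μ(V ∩ T) > 0 is a label y maximizing P(Y = y | X ∈ V ∩ T). Then err_{μ̄}(h) ≤ R*_{μ̄} + 5ν. -/

import Mathlib

open MeasureTheory
open scoped ENNReal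

section Aux

variable {X Y : Type*} [MeasurableSpace X] [MeasurableSpace Y] [MeasurableSingletonClass Y]

lemma aux_prod_split (μbar : Measure (X × Y)) {A : Set X} (hA : MeasurableSet A) (y : Y) :
    μbar (A ×ˢ ({y} : Set Y)) + μbar (A ×ˢ ({y}ᶜ : Set Y)) = μbar (A ×ˢ (Set.univ : Set Y)) := by
  rw [← measure_union ?_ (hA.prod (measurableSet_singleton y).compl)]
  · rw [← Set.prod_union, Set.union_compl_self]
  · exact Set.disjoint_left.2 fun p hp hp' => hp'.2 hp.2

end Aux

/-- **True majority votes on fine partitions approach the Bayes risk.** -/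
theorem true_majority_vote_near_bayes {X Y : Type*} [MetricSpace X] [MeasurableSpace X]
    [BorelSpace X] [Countable Y] [MeasurableSpace Y] [MeasurableSingletonClass Y]
    (μbar : Measure (X × Y)) [IsProbabilityMeasure μbar]
    (ν : ℝ) (hν : 0 < ν) :
    ∃ β : ℝ, 0 < β ∧
      ∀ V : ℕ → Set X, (∀ i, MeasurableSet (V i)) →
        Pairwise (Function.onFun Disjoint V) → (⋃ i, V i) = Set.univ →
      ∀ T : Set X, MeasurableSet T →
        μbar.map Prod.fst Tᶜ ≤ ENNReal.ofReal ν →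
        (∀ i, EMetric.diam (V i ∩ T) ≤ ENNReal.ofReal β) →
      ∀ h : X → Y,
        (∀ i, ∀ x ∈ V i, ∀ x' ∈ V i, h x = h x') →
        (∀ i, 0 < μbar.map Prod.fst (V i ∩ T) →
          ∀ x ∈ V i, ∀ y : Y,
            μbar ((V i ∩ T) ×ˢ ({y} : Set Y)) ≤ μbar ((V i ∩ T) ×ˢ ({h x} : Set Y))) →
        μbar {p : X × Y | h p.1 ≠ p.2} ≤
          (⨅ (f : X → Y) (_ : Measurable f), μbar {p : X × Y | f p.1 ≠ p.2})
            + ENNReal.ofReal (5 * ν) := by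
  classical
  set μ : Measure X := μbar.map Prod.fst with hμdef
  haveI hμprob : IsProbabilityMeasure μ := Measure.isProbabilityMeasure_map measurable_fst.aemeasurable
  have hXYne : Nonempty (X × Y) := by
    by_contra hcon
    rw [not_nonempty_iff] at hcon
    have h1 : μbar Set.univ = 1 := measure_univ
    rw [Set.univ_eq_empty_iff.2 hcon, measure_empty] at h1
    exact zero_ne_one h1
  haveI : Nonempty Y := ⟨hXYne.some.2⟩
  set R : ℝ≥0∞ := ⨅ (f : X → Y) (_ : Measurable f), μbar {p : X × Y | f p.1 ≠ p.2} with hRdef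
  have hνne : ENNReal.ofReal ν ≠ 0 := by
    simp [ENNReal.ofReal_eq_zero, not_le, hν]
  have hRtop : R ≠ ∞ := by
    have : R ≤ μbar {p : X × Y | (fun _ : X => Classical.arbitrary Y) p.1 ≠ p.2} :=
      iInf₂_le _ measurable_const
    exact ne_top_of_le_ne_top (measure_ne_top μbar _) this
  -- a near optimal measurable classifier
  obtain ⟨f, hf, hferr⟩ : ∃ f : X → Y, Measurable f ∧
      μbar {p : X × Y | f p.1 ≠ p.2} ≤ R + ENNReal.ofReal ν := by
    have hlt : R < R + ENNReal.ofReal ν := ENNReal.lt_add_right hRtop hνne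
    rw [hRdef] at hlt
    obtain ⟨f, hf2⟩ := iInf_lt_iff.1 hlt
    obtain ⟨hfm, hf3⟩ := iInf_lt_iff.1 hf2
    exact ⟨f, hfm, hf3.le⟩
  obtain ⟨φ, hφ⟩ := exists_surjective_nat Y
  set D : Y → Set X := fun y => f ⁻¹' {y} with hDdef
  have hDm : ∀ y, MeasurableSet (D y) := fun y => hf (measurableSet_singleton y)
  set B : ℕ → Set X := fun n => ⋃ k < n, D (φ k) with hBdef
  have hBm : ∀ n, MeasurableSet (B n) := fun n =>
    MeasurableSet.iUnion fun k => MeasurableSet.iUnion fun _ => hDm _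
  -- choose n₀ with μ (B n₀)ᶜ ≤ ofReal ν
  obtain ⟨n₀, hn₀⟩ : ∃ n, μ (B n)ᶜ ≤ ENNReal.ofReal ν := by
    have hanti : Antitone fun n => (B n)ᶜ := by
      intro a b hab
      refine Set.compl_subset_compl.2 ?_
      exact Set.iUnion₂_mono' fun k hk => ⟨k, lt_of_lt_of_le hk hab, subset_rfl⟩
    have hint : (⋂ n, (B n)ᶜ) = ∅ := by
      rw [← Set.compl_iUnion, Set.compl_empty_iff]
      refine Set.eq_univ_of_forall fun x => ?_
      obtain ⟨k, hk⟩ := hφ (f x)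
      exact Set.mem_iUnion.2 ⟨k + 1, Set.mem_iUnion₂.2 ⟨k, Nat.lt_succ_self k,
        by simp [hDdef, hk]⟩⟩
    have htend := tendsto_measure_iInter_atTop (μ := μ)
      (fun n => ((hBm n).compl).nullMeasurableSet) hanti ⟨0, measure_ne_top μ _⟩
    rw [hint, measure_empty] at htend
    have := htend.eventually_lt_const (show (0:ℝ≥0∞) < ENNReal.ofReal ν from pos_iff_ne_zero.2 hνne)
    obtain ⟨n, hn⟩ := this.exists
    exact ⟨n, hn.le⟩
  -- closed approximations of the level sets
  have hε : (ENNReal.ofReal ν / (n₀ + 1) : ℝ≥0∞) ≠ 0 := by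
    simp only [ne_eq, ENNReal.div_eq_zero_iff, hνne, false_or]
    exact ENNReal.add_ne_top.2 ⟨ENNReal.natCast_ne_top n₀, ENNReal.one_ne_top⟩
  have hCex : ∀ k : ℕ, ∃ F, F ⊆ D (φ k) ∧ IsClosed F ∧
      μ (D (φ k) \ F) < ENNReal.ofReal ν / (n₀ + 1) :=
    fun k => by
      obtain ⟨F, h1, h2, h3⟩ := (hDm (φ k)).exists_isClosed_diff_lt (measure_ne_top μ _) hε
      exact ⟨F, h1, h2, h3⟩
  choose C hCsub hCcl hCμ using hCex
  have hCm : ∀ k, MeasurableSet (C k) := fun k => (hCcl k).measurableSet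
  set CU : Set X := ⋃ k < n₀, C k with hCUdef
  have hCUm : MeasurableSet CU :=
    MeasurableSet.iUnion fun k => MeasurableSet.iUnion fun _ => hCm k
  have hCUB : μ (B n₀ \ CU) ≤ ENNReal.ofReal ν := by
    have hsub : B n₀ \ CU ⊆ ⋃ k ∈ Finset.range n₀, (D (φ k) \ C k) := by
      rintro x ⟨hx, hx'⟩
      obtain ⟨k, hk, hxk⟩ := Set.mem_iUnion₂.1 hx
      refine Set.mem_iUnion₂.2 ⟨k, Finset.mem_range.2 hk, hxk, fun hc => hx' ?_⟩
      exact Set.mem_iUnion₂.2 ⟨k, hk, hc⟩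
    calc μ (B n₀ \ CU) ≤ ∑ k ∈ Finset.range n₀, μ (D (φ k) \ C k) :=
          le_trans (measure_mono hsub) (measure_biUnion_finset_le _ _)
      _ ≤ ∑ _k ∈ Finset.range n₀, ENNReal.ofReal ν / (n₀ + 1) :=
          Finset.sum_le_sum fun k _ => (hCμ k).le
      _ = n₀ * (ENNReal.ofReal ν / (n₀ + 1)) := by
          rw [Finset.sum_const, Finset.card_range, nsmul_eq_mul]
      _ ≤ (n₀ + 1) * (ENNReal.ofReal ν / (n₀ + 1)) := by
          gcongr; exact le_self_add
      _ ≤ ENNReal.ofReal ν := ENNReal.mul_div_le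
  -- the separated sets E m
  set E : ℕ → Set X := fun m => ⋃ k, ⋃ (_ : k < n₀), C k ∩ ⋂ j, ⋂ (_ : j < n₀),
    {x | φ j = φ k ∨ ENNReal.ofReal (1 / (m + 1)) ≤ EMetric.infEdist x (C j)} with hEdef
  have hEm : ∀ m, MeasurableSet (E m) := by
    intro m
    refine MeasurableSet.iUnion fun k => MeasurableSet.iUnion fun _ =>
      (hCm k).inter (MeasurableSet.iInter fun j => MeasurableSet.iInter fun _ => ?_)
    by_cases hjk : φ j = φ k
    · simp [hjk]
    · have : {x : X | φ j = φ k ∨ ENNReal.ofReal (1 / (m + 1)) ≤ EMetric.infEdist x (C j)}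
          = (fun x => EMetric.infEdist x (C j)) ⁻¹' Set.Ici (ENNReal.ofReal (1 / (m + 1))) := by
        ext x; simp [hjk]
      rw [this]
      exact (EMetric.continuous_infEdist).measurable measurableSet_Ici
  have hEsubCU : ∀ m, E m ⊆ CU := by
    intro m x hx
    obtain ⟨k, hk, hxk, -⟩ := by
      simpa only [hEdef, Set.mem_iUnion, Set.mem_inter_iff, exists_prop] using hx
    exact Set.mem_iUnion₂.2 ⟨k, hk, hxk⟩
  have hEmono : Monotone E := by
    intro a b hab x hx
    simp only [hEdef, Set.mem_iUnion, Set.mem_inter_iff, Set.mem_iInter, Set.mem_setOf_eq,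
      exists_prop] at hx ⊢
    obtain ⟨k, hk, hxk, hsep⟩ := hx
    refine ⟨k, hk, hxk, fun j hj => ?_⟩
    rcases hsep j hj with hc | hc
    · exact Or.inl hc
    · refine Or.inr (le_trans (ENNReal.ofReal_le_ofReal ?_) hc)
      gcongr
  have hEunion : (⋃ m, E m) = CU := by
    refine Set.Subset.antisymm (Set.iUnion_subset fun m => hEsubCU m) fun x hx => ?_
    obtain ⟨k, hk, hxk⟩ := Set.mem_iUnion₂.1 hx
    -- for each j < n₀ with φ j ≠ φ k, infEdist x (C j) > 0
    have hpos : ∀ j, j < n₀ → φ j ≠ φ k → ∃ m : ℕ,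
        ENNReal.ofReal (1 / (m + 1)) ≤ EMetric.infEdist x (C j) := by
      intro j hj hjk
      have hxnot : x ∉ C j := fun hc => hjk (by
        have h1 : f x = φ j := hCsub j hc
        have h2 : f x = φ k := hCsub k hxk
        rw [← h1, h2])
      have hpos : 0 < EMetric.infEdist x (C j) := by
        refine EMetric.infEdist_pos_iff_notMem_closure.2 ?_; rw [(hCcl j).closure_eq]
        exact hxnot
      rcases eq_or_ne (EMetric.infEdist x (C j)) ∞ with htop | htop
      · exact ⟨0, htop ▸ le_top⟩
      · have hr : 0 < (EMetric.infEdist x (C j)).toReal :=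
          ENNReal.toReal_pos hpos.ne' htop
        obtain ⟨m, hm⟩ := exists_nat_one_div_lt hr
        refine ⟨m, ?_⟩
        rw [← ENNReal.ofReal_toReal htop]
        exact ENNReal.ofReal_le_ofReal hm.le
    choose! M hM using hpos
    set Mmax := (Finset.range n₀).sup (fun j => if φ j = φ k then 0 else M j) with hMmax
    refine Set.mem_iUnion.2 ⟨Mmax, ?_⟩
    simp only [hEdef, Set.mem_iUnion, Set.mem_inter_iff, Set.mem_iInter, Set.mem_setOf_eq,
      exists_prop]
    refine ⟨k, hk, hxk, fun j hj => ?_⟩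
    by_cases hjk : φ j = φ k
    · exact Or.inl hjk
    · refine Or.inr (le_trans (ENNReal.ofReal_le_ofReal ?_) (hM j hj hjk))
      have hle : M j ≤ Mmax := by
        rw [hMmax]
        have := Finset.le_sup (f := fun j => if φ j = φ k then 0 else M j)
          (Finset.mem_range.2 hj)
        simpa [hjk] using this
      gcongr
  -- choose m₀ with μ (CU \ E m₀) ≤ ofReal ν
  obtain ⟨m₀, hm₀⟩ : ∃ m, μ (CU \ E m) ≤ ENNReal.ofReal ν := by
    have hanti : Antitone fun m => CU \ E m := fun a b hab =>
      Set.diff_subset_diff_right (hEmono hab)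
    have hint : (⋂ m, CU \ E m) = ∅ := by
      simp only [Set.diff_eq]
      rw [← Set.inter_iInter, ← Set.compl_iUnion, hEunion, Set.inter_compl_self]
    have htend := tendsto_measure_iInter_atTop (μ := μ)
      (fun m => (hCUm.diff (hEm m)).nullMeasurableSet) hanti ⟨0, measure_ne_top μ _⟩
    rw [hint, measure_empty] at htend
    obtain ⟨m, hm⟩ := (htend.eventually_lt_const
      (show (0:ℝ≥0∞) < ENNReal.ofReal ν from pos_iff_ne_zero.2 hνne)).exists
    exact ⟨m, hm.le⟩
  set K : Set X := E m₀ with hKdef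
  have hKm : MeasurableSet K := hEm m₀
  -- the separation property
  refine ⟨1 / (2 * (m₀ + 1)), by positivity, ?_⟩
  have hβlt : ENNReal.ofReal (1 / (2 * (m₀ + 1))) < ENNReal.ofReal (1 / (m₀ + 1)) := by
    rw [ENNReal.ofReal_lt_ofReal_iff (by positivity)]
    rw [div_lt_div_iff₀ (by positivity) (by positivity)]
    nlinarith [Nat.cast_nonneg (α := ℝ) m₀]
  have hsep : ∀ x ∈ K, ∀ x' ∈ K,
      edist x x' ≤ ENNReal.ofReal (1 / (2 * (m₀ + 1))) → f x = f x' := by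
    intro x hx x' hx' hdist
    simp only [hKdef, hEdef, Set.mem_iUnion, Set.mem_inter_iff, Set.mem_iInter,
      Set.mem_setOf_eq, exists_prop] at hx hx'
    obtain ⟨k, hk, hxk, hxsep⟩ := hx
    obtain ⟨j, hj, hxj, -⟩ := hx'
    have hfx : f x = φ k := hCsub k hxk
    have hfx' : f x' = φ j := hCsub j hxj
    rcases hxsep j hj with heq | hge
    · rw [hfx, hfx', heq]
    · exfalso
      have : EMetric.infEdist x (C j) ≤ edist x x' := EMetric.infEdist_le_edist_of_mem hxj
      exact absurd (le_trans hge (le_trans this hdist)) (not_le.2 hβlt)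
  -- the main argument
  intro V hVm hVd hVu T hTm hTν hdiam h hconst hmaj
  set errF : Set (X × Y) := {p : X × Y | f p.1 ≠ p.2} with herrFdef
  have herrFm : MeasurableSet errF := by
    have : errF = ⋃ y : Y, (f ⁻¹' {y}) ×ˢ ({y}ᶜ : Set Y) := by
      ext p
      simp only [herrFdef, Set.mem_setOf_eq, Set.mem_iUnion, Set.mem_prod, Set.mem_preimage,
        Set.mem_singleton_iff, Set.mem_compl_iff]
      constructor
      · intro hne; exact ⟨f p.1, rfl, fun hc => hne (hc ▸ rfl)⟩
      · rintro ⟨y, hy, hne⟩ hc; exact hne (hy ▸ hc.symm ▸ rfl)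
    rw [this]
    exact MeasurableSet.iUnion fun y =>
      (hf (measurableSet_singleton y)).prod (measurableSet_singleton y).compl
  -- μ of a product with univ
  have hμprod : ∀ A : Set X, MeasurableSet A → μbar (A ×ˢ (Set.univ : Set Y)) = μ A := by
    intro A hA
    rw [hμdef, Measure.map_apply measurable_fst hA, Set.prod_univ]
  -- per-cell bound
  have hcell : ∀ i, μbar ({p : X × Y | h p.1 ≠ p.2} ∩ (V i ×ˢ (Set.univ : Set Y))) ≤
      μbar ((V i \ T) ×ˢ (Set.univ : Set Y)) +
        (μbar ((V i \ K) ×ˢ (Set.univ : Set Y)) + μbar (errF ∩ (V i ×ˢ (Set.univ : Set Y)))) := by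
    intro i
    rcases Set.eq_empty_or_nonempty (V i) with hVe | ⟨x₀, hx₀⟩
    · simp [hVe]
    set c : Y := h x₀ with hcdef
    -- first split
    have hsplit1 : {p : X × Y | h p.1 ≠ p.2} ∩ (V i ×ˢ (Set.univ : Set Y)) ⊆
        ((V i \ T) ×ˢ (Set.univ : Set Y)) ∪ ((V i ∩ T) ×ˢ ({c}ᶜ : Set Y)) := by
      rintro ⟨x, y⟩ ⟨hne, hxV, -⟩
      by_cases hxT : x ∈ T
      · refine Or.inr ⟨⟨hxV, hxT⟩, fun hc => ?_⟩
        apply hne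
        rw [Set.mem_singleton_iff] at hc
        rw [hconst i x hxV x₀ hx₀, ← hcdef, hc]
      · exact Or.inl ⟨⟨hxV, hxT⟩, Set.mem_univ _⟩
    -- bound on the (V i ∩ T) × {c}ᶜ part
    have hmain : μbar ((V i ∩ T) ×ˢ ({c}ᶜ : Set Y)) ≤
        μbar ((V i \ K) ×ˢ (Set.univ : Set Y)) + μbar (errF ∩ (V i ×ˢ (Set.univ : Set Y))) := by
      rcases eq_or_lt_of_le (zero_le : (0:ℝ≥0∞) ≤ μ (V i ∩ T)) with hμ0 | hμpos
      · -- zero mass cell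
        have : μbar ((V i ∩ T) ×ˢ ({c}ᶜ : Set Y)) ≤ μ (V i ∩ T) := by
          rw [← hμprod _ ((hVm i).inter hTm)]
          exact measure_mono (Set.prod_mono_right (Set.subset_univ _))
        rw [← hμ0] at this
        exact le_trans (le_of_le_of_eq this rfl) zero_le
      rcases Set.eq_empty_or_nonempty (V i ∩ T ∩ K) with hVTK | ⟨x₁, hx₁⟩
      · -- V i ∩ T misses K entirely
        have hsub : V i ∩ T ⊆ V i \ K := fun x hx =>
          ⟨hx.1, fun hc => Set.eq_empty_iff_forall_notMem.1 hVTK x ⟨hx, hc⟩⟩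
        calc μbar ((V i ∩ T) ×ˢ ({c}ᶜ : Set Y)) ≤ μbar ((V i \ K) ×ˢ (Set.univ : Set Y)) :=
              measure_mono (Set.prod_mono hsub (Set.subset_univ _))
          _ ≤ _ := le_self_add
      · -- the interesting case
        set y₁ : Y := f x₁ with hy₁def
        -- f is constant (= y₁) on V i ∩ T ∩ K
        have hfconst : ∀ x ∈ V i ∩ T ∩ K, f x = y₁ := by
          intro x hx
          refine hsep x hx.2 x₁ hx₁.2 ?_
          exact le_trans (EMetric.edist_le_diam_of_mem hx.1 hx₁.1) (hdiam i)
        -- majority optimality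
        have hkey : μbar ((V i ∩ T) ×ˢ ({y₁} : Set Y)) ≤ μbar ((V i ∩ T) ×ˢ ({c} : Set Y)) :=
          hmaj i hμpos x₀ hx₀ y₁
        -- cancel to get the complement inequality
        have hcancel : μbar ((V i ∩ T) ×ˢ ({c}ᶜ : Set Y)) ≤
            μbar ((V i ∩ T) ×ˢ ({y₁}ᶜ : Set Y)) := by
          have hVT : MeasurableSet (V i ∩ T) := (hVm i).inter hTm
          refine ENNReal.le_of_add_le_add_right (a := μbar ((V i ∩ T) ×ˢ ({y₁} : Set Y)))
            (measure_ne_top μbar _) ?_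
          calc μbar ((V i ∩ T) ×ˢ ({c}ᶜ : Set Y)) + μbar ((V i ∩ T) ×ˢ ({y₁} : Set Y))
              ≤ μbar ((V i ∩ T) ×ˢ ({c}ᶜ : Set Y)) + μbar ((V i ∩ T) ×ˢ ({c} : Set Y)) := by
                gcongr
            _ = μbar ((V i ∩ T) ×ˢ (Set.univ : Set Y)) := by
                rw [add_comm]; exact aux_prod_split μbar hVT c
            _ = μbar ((V i ∩ T) ×ˢ ({y₁}ᶜ : Set Y)) + μbar ((V i ∩ T) ×ˢ ({y₁} : Set Y)) := by
                rw [add_comm]; exact (aux_prod_split μbar hVT y₁).symm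
        -- split off K
        have hsplit2 : (V i ∩ T) ×ˢ ({y₁}ᶜ : Set Y) ⊆
            ((V i \ K) ×ˢ (Set.univ : Set Y)) ∪ (errF ∩ (V i ×ˢ (Set.univ : Set Y))) := by
          rintro ⟨x, y⟩ ⟨⟨hxV, hxT⟩, hy⟩
          by_cases hxK : x ∈ K
          · refine Or.inr ⟨?_, hxV, Set.mem_univ _⟩
            have : f x = y₁ := hfconst x ⟨⟨hxV, hxT⟩, hxK⟩
            simp only [herrFdef, Set.mem_setOf_eq, this]
            exact fun hc => hy (hc ▸ rfl)
          · exact Or.inl ⟨⟨hxV, hxK⟩, Set.mem_univ _⟩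
        calc μbar ((V i ∩ T) ×ˢ ({c}ᶜ : Set Y)) ≤ μbar ((V i ∩ T) ×ˢ ({y₁}ᶜ : Set Y)) := hcancel
          _ ≤ _ := le_trans (measure_mono hsplit2) (measure_union_le _ _)
    calc μbar ({p : X × Y | h p.1 ≠ p.2} ∩ (V i ×ˢ (Set.univ : Set Y)))
        ≤ μbar (((V i \ T) ×ˢ (Set.univ : Set Y)) ∪ ((V i ∩ T) ×ˢ ({c}ᶜ : Set Y))) :=
          measure_mono hsplit1
      _ ≤ μbar ((V i \ T) ×ˢ (Set.univ : Set Y)) + μbar ((V i ∩ T) ×ˢ ({c}ᶜ : Set Y)) :=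
          measure_union_le _ _
      _ ≤ _ := by gcongr
  -- sum the per-cell bounds
  have hcover : {p : X × Y | h p.1 ≠ p.2} ⊆
      ⋃ i, ({p : X × Y | h p.1 ≠ p.2} ∩ (V i ×ˢ (Set.univ : Set Y))) := by
    intro p hp
    have : p.1 ∈ ⋃ i, V i := hVu ▸ Set.mem_univ _
    obtain ⟨i, hi⟩ := Set.mem_iUnion.1 this
    exact Set.mem_iUnion.2 ⟨i, hp, hi, Set.mem_univ _⟩
  have hprod_disj : ∀ (S : ℕ → Set X), Pairwise (Function.onFun Disjoint S) →
      Pairwise (Function.onFun Disjoint (fun i => S i ×ˢ (Set.univ : Set Y))) := by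
    intro S hS i j hij
    exact Set.disjoint_left.2 fun p hp hp' =>
      Set.disjoint_left.1 (hS hij) hp.1 hp'.1
  -- sum of the T-terms
  have hsumT : ∑' i, μbar ((V i \ T) ×ˢ (Set.univ : Set Y)) ≤ ENNReal.ofReal ν := by
    rw [← measure_iUnion (hprod_disj _ (hVd.mono fun i j hd => hd.mono
        Set.diff_subset Set.diff_subset))
      (fun i => ((hVm i).diff hTm).prod MeasurableSet.univ)]
    have : (⋃ i, (V i \ T) ×ˢ (Set.univ : Set Y)) = Tᶜ ×ˢ (Set.univ : Set Y) := by
      rw [← Set.iUnion_prod_const]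
      congr 1
      rw [← Set.iUnion_diff, hVu, ← Set.compl_eq_univ_diff]
    rw [this, hμprod _ hTm.compl]
    exact hTν
  -- sum of the K-terms
  have hKc : μ Kᶜ ≤ ENNReal.ofReal ν + ENNReal.ofReal ν + ENNReal.ofReal ν := by
    have hsub : Kᶜ ⊆ (B n₀)ᶜ ∪ (B n₀ \ CU) ∪ (CU \ K) := by
      intro x hx
      by_cases h1 : x ∈ B n₀
      · by_cases h2 : x ∈ CU
        · exact Or.inr ⟨h2, hx⟩
        · exact Or.inl (Or.inr ⟨h1, h2⟩)
      · exact Or.inl (Or.inl h1)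
    calc μ Kᶜ ≤ μ ((B n₀)ᶜ ∪ (B n₀ \ CU)) + μ (CU \ K) :=
          le_trans (measure_mono hsub) (measure_union_le _ _)
      _ ≤ (μ (B n₀)ᶜ + μ (B n₀ \ CU)) + μ (CU \ K) := by
          gcongr; exact measure_union_le _ _
      _ ≤ _ := by gcongr
  have hsumK : ∑' i, μbar ((V i \ K) ×ˢ (Set.univ : Set Y)) ≤
      ENNReal.ofReal ν + ENNReal.ofReal ν + ENNReal.ofReal ν := by
    rw [← measure_iUnion (hprod_disj _ (hVd.mono fun i j hd => hd.mono
        Set.diff_subset Set.diff_subset))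
      (fun i => ((hVm i).diff hKm).prod MeasurableSet.univ)]
    have : (⋃ i, (V i \ K) ×ˢ (Set.univ : Set Y)) = Kᶜ ×ˢ (Set.univ : Set Y) := by
      rw [← Set.iUnion_prod_const]
      congr 1
      rw [← Set.iUnion_diff, hVu, ← Set.compl_eq_univ_diff]
    rw [this, hμprod _ hKm.compl]
    exact hKc
  -- sum of the f-error terms
  have hsumF : ∑' i, μbar (errF ∩ (V i ×ˢ (Set.univ : Set Y))) ≤ R + ENNReal.ofReal ν := by
    rw [← measure_iUnion (fun i j hij => Set.disjoint_left.2 fun p hp hp' =>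
        Set.disjoint_left.1 (hprod_disj _ hVd hij) hp.2 hp'.2)
      (fun i => herrFm.inter ((hVm i).prod MeasurableSet.univ))]
    refine le_trans (measure_mono ?_) hferr
    intro p hp
    obtain ⟨i, hpi⟩ := Set.mem_iUnion.1 hp
    exact hpi.1
  -- put everything together
  calc μbar {p : X × Y | h p.1 ≠ p.2}
      ≤ ∑' i, μbar ({p : X × Y | h p.1 ≠ p.2} ∩ (V i ×ˢ (Set.univ : Set Y))) :=
        le_trans (measure_mono hcover) (measure_iUnion_le _)
    _ ≤ ∑' i, (μbar ((V i \ T) ×ˢ (Set.univ : Set Y)) +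
          (μbar ((V i \ K) ×ˢ (Set.univ : Set Y)) +
            μbar (errF ∩ (V i ×ˢ (Set.univ : Set Y))))) :=
        ENNReal.tsum_le_tsum hcell
    _ = (∑' i, μbar ((V i \ T) ×ˢ (Set.univ : Set Y))) +
          ((∑' i, μbar ((V i \ K) ×ˢ (Set.univ : Set Y))) +
            ∑' i, μbar (errF ∩ (V i ×ˢ (Set.univ : Set Y)))) := by
        rw [ENNReal.tsum_add, ENNReal.tsum_add]
    _ ≤ ENNReal.ofReal ν + ((ENNReal.ofReal ν + ENNReal.ofReal ν + ENNReal.ofReal ν) +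
          (R + ENNReal.ofReal ν)) := by gcongr
    _ = R + ENNReal.ofReal (5 * ν) := by
        have h5 : ENNReal.ofReal (5 * ν) = ENNReal.ofReal ν + ENNReal.ofReal ν +
            ENNReal.ofReal ν + ENNReal.ofReal ν + ENNReal.ofReal ν := by
          rw [show (5:ℝ) * ν = ν + ν + ν + ν + ν by ring,
            ENNReal.ofReal_add (by linarith) hν.le, ENNReal.ofReal_add (by linarith) hν.le,
            ENNReal.ofReal_add (by linarith) hν.le, ENNReal.ofReal_add (by linarith) hν.le]
        rw [h5]; ring
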